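/- For every Q : S × A → ℝ with 0 ≤ Q(s,a) for all (s,a), the softmax policy πQ defined by πQ s a = exp (Q(s,a)) / ∑_{a'∈A} exp (Q(s,a')) is a policy and satisfies Ĥ(Q,πQ) ≤ Ĥ(Q,π) for every policy π. If in addition μ0(s) > 0 for every s ∈ S, then πQ is the unique policy minimizing π ↦ Ĥ(Q,π): any policy π ≠ πQ satisfies Ĥ(Q,πQ) < Ĥ(Q,π). -/

import Mathlib

/-- Soft value `V[Q,π](s) = ∑ a, π s a * (Q (s,a) - log (π s a))`. -/
noncomputable def softV {S A : Type*} [Fintype A]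
    (Q : S × A → ℝ) (pol : S → A → ℝ) (s : S) : ℝ :=
  ∑ a, pol s a * (Q (s, a) - Real.log (pol s a))

/-- `W[Q,π](s,a) = γ * ∑ s', P s a s' * V[Q,π](s')`. -/
noncomputable def softW {S A : Type*} [Fintype S] [Fintype A]
    (P : S → A → S → ℝ) (γ : ℝ) (Q : S × A → ℝ) (pol : S → A → ℝ) (s : S) (a : A) : ℝ :=
  γ * ∑ s', P s a s' * softV Q pol s'

/-- The objective `H(Q,π)`. -/
noncomputable def Hobj {S A : Type*} [Fintype S] [Fintype A]
    (P : S → A → S → ℝ) (γ : ℝ) (ρ : S × A → ℝ) (μ0 : S → ℝ)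
    (rbar : S × A → ℝ) (α : ℝ) (Q : S × A → ℝ) (pol : S → A → ℝ) : ℝ :=
  ∑ sa : S × A, ρ sa * (Q sa - softW P γ Q pol sa.1 sa.2)
    - (1 - γ) * ∑ s, μ0 s * softV Q pol s
    - α * ∑ sa : S × A, ρ sa * (Q sa - rbar sa - softW P γ Q pol sa.1 sa.2) ^ 2

/-- The modified objective `Ĥ(Q,π)`. -/
noncomputable def Hhat {S A : Type*} [Fintype S] [Fintype A]
    (P : S → A → S → ℝ) (γ : ℝ) (ρ : S × A → ℝ) (μ0 : S → ℝ)
    (rbar : S × A → ℝ) (α : ℝ) (Q : S × A → ℝ) (pol : S → A → ℝ) : ℝ :=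
  ∑ sa : S × A, ρ sa * (Q sa - softW P γ Q pol sa.1 sa.2)
    - (1 - γ) * ∑ s, μ0 s * softV Q pol s
    - α * ∑ sa : S × A, ρ sa * ((Q sa - rbar sa) ^ 2 + (softW P γ Q pol sa.1 sa.2) ^ 2
        + 2 * max 0 (rbar sa - Q sa) * softW P γ Q pol sa.1 sa.2)


private lemma key_term {Z qa pa : ℝ} (hZ : 0 < Z) (hpa : 0 ≤ pa) :
    pa * (qa - Real.log pa - Real.log Z) ≤ Real.exp qa / Z - pa := by
  rcases eq_or_lt_of_le hpa with h0 | h0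
  · simp only [← h0, zero_mul, sub_zero]
    positivity
  · have hx0 : (0:ℝ) < Real.exp qa / (Z * pa) := by positivity
    have hlogx : Real.log (Real.exp qa / (Z * pa)) = qa - Real.log Z - Real.log pa := by
      rw [Real.log_div (Real.exp_ne_zero _) (by positivity), Real.log_exp,
        Real.log_mul hZ.ne' h0.ne']
      ring
    have h := Real.log_le_sub_one_of_pos hx0
    calc pa * (qa - Real.log pa - Real.log Z)
        = pa * Real.log (Real.exp qa / (Z * pa)) := by rw [hlogx]; ring
      _ ≤ pa * (Real.exp qa / (Z * pa) - 1) := mul_le_mul_of_nonneg_left h hpa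
      _ = Real.exp qa / Z - pa := by field_simp

private lemma key_term_strict {Z qa pa : ℝ} (hZ : 0 < Z) (hpa : 0 ≤ pa)
    (hne : pa ≠ Real.exp qa / Z) :
    pa * (qa - Real.log pa - Real.log Z) < Real.exp qa / Z - pa := by
  rcases eq_or_lt_of_le hpa with h0 | h0
  · simp only [← h0, zero_mul, sub_zero]
    positivity
  · have hx0 : (0:ℝ) < Real.exp qa / (Z * pa) := by positivity
    have hx1 : Real.exp qa / (Z * pa) ≠ 1 := by
      intro h
      apply hne
      field_simp at h
      field_simp
      linarith
    have hlogx : Real.log (Real.exp qa / (Z * pa)) = qa - Real.log Z - Real.log pa := by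
      rw [Real.log_div (Real.exp_ne_zero _) (by positivity), Real.log_exp,
        Real.log_mul hZ.ne' h0.ne']
      ring
    have h := Real.log_lt_sub_one_of_pos hx0 hx1
    calc pa * (qa - Real.log pa - Real.log Z)
        = pa * Real.log (Real.exp qa / (Z * pa)) := by rw [hlogx]; ring
      _ < pa * (Real.exp qa / (Z * pa) - 1) := by exact mul_lt_mul_of_pos_left h h0
      _ = Real.exp qa / Z - pa := by field_simp

private lemma gibbs_le {A : Type*} [Fintype A] [Nonempty A] (q p : A → ℝ)
    (hp : ∀ a, 0 ≤ p a) (hp1 : ∑ a, p a = 1) :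
    ∑ a, p a * (q a - Real.log (p a)) ≤ Real.log (∑ a, Real.exp (q a)) := by
  have hZ : 0 < ∑ a, Real.exp (q a) :=
    Finset.sum_pos (fun a _ => Real.exp_pos _) Finset.univ_nonempty
  have h : ∑ a, p a * (q a - Real.log (p a) - Real.log (∑ a', Real.exp (q a')))
      ≤ ∑ a, (Real.exp (q a) / (∑ a', Real.exp (q a')) - p a) :=
    Finset.sum_le_sum fun a _ => key_term hZ (hp a)
  have hrhs : ∑ a, (Real.exp (q a) / (∑ a', Real.exp (q a')) - p a) = 0 := by
    rw [Finset.sum_sub_distrib, ← Finset.sum_div, hp1, div_self hZ.ne']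
    ring
  have hlhs : ∑ a, p a * (q a - Real.log (p a) - Real.log (∑ a', Real.exp (q a')))
      = (∑ a, p a * (q a - Real.log (p a))) - Real.log (∑ a', Real.exp (q a')) := by
    simp only [mul_sub, Finset.sum_sub_distrib, ← Finset.sum_mul, hp1, one_mul]
  rw [hlhs, hrhs] at h
  linarith

private lemma gibbs_lt {A : Type*} [Fintype A] [Nonempty A] (q p : A → ℝ)
    (hp : ∀ a, 0 ≤ p a) (hp1 : ∑ a, p a = 1)
    (hne : p ≠ fun a => Real.exp (q a) / ∑ a', Real.exp (q a')) :
    ∑ a, p a * (q a - Real.log (p a)) < Real.log (∑ a, Real.exp (q a)) := by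
  have hZ : 0 < ∑ a, Real.exp (q a) :=
    Finset.sum_pos (fun a _ => Real.exp_pos _) Finset.univ_nonempty
  obtain ⟨a0, ha0⟩ : ∃ a, p a ≠ Real.exp (q a) / ∑ a', Real.exp (q a') := by
    by_contra hc
    push_neg at hc
    exact hne (funext hc)
  have h : ∑ a, p a * (q a - Real.log (p a) - Real.log (∑ a', Real.exp (q a')))
      < ∑ a, (Real.exp (q a) / (∑ a', Real.exp (q a')) - p a) :=
    Finset.sum_lt_sum (fun a _ => key_term hZ (hp a))
      ⟨a0, Finset.mem_univ _, key_term_strict hZ (hp a0) ha0⟩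
  have hrhs : ∑ a, (Real.exp (q a) / (∑ a', Real.exp (q a')) - p a) = 0 := by
    rw [Finset.sum_sub_distrib, ← Finset.sum_div, hp1, div_self hZ.ne']
    ring
  have hlhs : ∑ a, p a * (q a - Real.log (p a) - Real.log (∑ a', Real.exp (q a')))
      = (∑ a, p a * (q a - Real.log (p a))) - Real.log (∑ a', Real.exp (q a')) := by
    simp only [mul_sub, Finset.sum_sub_distrib, ← Finset.sum_mul, hp1, one_mul]
  rw [hlhs, hrhs] at h
  linarith

private lemma softmax_val {A : Type*} [Fintype A] [Nonempty A] (q : A → ℝ) :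
    ∑ a, (Real.exp (q a) / ∑ a', Real.exp (q a')) *
        (q a - Real.log (Real.exp (q a) / ∑ a', Real.exp (q a')))
      = Real.log (∑ a, Real.exp (q a)) := by
  have hZ : 0 < ∑ a, Real.exp (q a) :=
    Finset.sum_pos (fun a _ => Real.exp_pos _) Finset.univ_nonempty
  have hlog : ∀ a, q a - Real.log (Real.exp (q a) / ∑ a', Real.exp (q a'))
      = Real.log (∑ a', Real.exp (q a')) := by
    intro a
    rw [Real.log_div (Real.exp_ne_zero _) hZ.ne', Real.log_exp]
    ring
  calc ∑ a, (Real.exp (q a) / ∑ a', Real.exp (q a')) *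
        (q a - Real.log (Real.exp (q a) / ∑ a', Real.exp (q a')))
      = ∑ a, (Real.exp (q a) / ∑ a', Real.exp (q a')) * Real.log (∑ a', Real.exp (q a')) := by
        exact Finset.sum_congr rfl fun a _ => by rw [hlog a]
    _ = (∑ a, Real.exp (q a) / ∑ a', Real.exp (q a')) * Real.log (∑ a', Real.exp (q a')) := by
        rw [Finset.sum_mul]
    _ = Real.log (∑ a, Real.exp (q a)) := by
        rw [← Finset.sum_div, div_self hZ.ne', one_mul]

private lemma softV_nonneg {S A : Type*} [Fintype A]
    (Q : S × A → ℝ) (hQ : ∀ sa, 0 ≤ Q sa) (pol : S → A → ℝ)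
    (hpol0 : ∀ s a, 0 ≤ pol s a) (hpol1 : ∀ s, ∑ a, pol s a = 1) (s : S) :
    0 ≤ softV Q pol s := by
  apply Finset.sum_nonneg
  intro a _
  apply mul_nonneg (hpol0 s a)
  have hle1 : pol s a ≤ 1 := by
    rw [← hpol1 s]
    exact Finset.single_le_sum (fun i _ => hpol0 s i) (Finset.mem_univ a)
  have := Real.log_nonpos (hpol0 s a) hle1
  linarith [hQ (s, a)]

private lemma Hhat_anti {S A : Type*} [Fintype S] [Fintype A]
    (P : S → A → S → ℝ) (hP0 : ∀ s a s', 0 ≤ P s a s')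
    (γ : ℝ) (hγ0 : 0 ≤ γ)
    (ρ : S × A → ℝ) (hρ : ∀ sa, 0 ≤ ρ sa)
    (μ0 : S → ℝ) (hμ0 : ∀ s, 0 ≤ μ0 s)
    (rbar : S × A → ℝ) (α : ℝ) (hα : 0 ≤ α) (Q : S × A → ℝ) (hγ1 : γ < 1)
    (pol1 pol2 : S → A → ℝ)
    (h0 : ∀ s, 0 ≤ softV Q pol1 s)
    (hle : ∀ s, softV Q pol1 s ≤ softV Q pol2 s) :
    Hhat P γ ρ μ0 rbar α Q pol2 ≤ Hhat P γ ρ μ0 rbar α Q pol1 := by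
  have hW0 : ∀ s a, 0 ≤ softW P γ Q pol1 s a := fun s a =>
    mul_nonneg hγ0 (Finset.sum_nonneg fun s' _ => mul_nonneg (hP0 s a s') (h0 s'))
  have hWle : ∀ s a, softW P γ Q pol1 s a ≤ softW P γ Q pol2 s a := fun s a =>
    mul_le_mul_of_nonneg_left
      (Finset.sum_le_sum fun s' _ => mul_le_mul_of_nonneg_left (hle s') (hP0 s a s')) hγ0
  unfold Hhat
  gcongr with sa _ s _ sa _
  · exact hρ sa
  · exact hWle sa.1 sa.2
  · exact hμ0 s
  · exact hle s
  · exact hρ sa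
  all_goals first
    | exact hW0 sa.1 sa.2
    | exact hWle sa.1 sa.2
    | positivity

private lemma Hhat_anti_strict {S A : Type*} [Fintype S] [Fintype A]
    (P : S → A → S → ℝ) (hP0 : ∀ s a s', 0 ≤ P s a s')
    (γ : ℝ) (hγ0 : 0 ≤ γ)
    (ρ : S × A → ℝ) (hρ : ∀ sa, 0 ≤ ρ sa)
    (μ0 : S → ℝ) (hμ0 : ∀ s, 0 < μ0 s)
    (rbar : S × A → ℝ) (α : ℝ) (hα : 0 ≤ α) (Q : S × A → ℝ) (hγ1 : γ < 1)
    (pol1 pol2 : S → A → ℝ)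
    (h0 : ∀ s, 0 ≤ softV Q pol1 s)
    (hle : ∀ s, softV Q pol1 s ≤ softV Q pol2 s)
    (hlt : ∃ s, softV Q pol1 s < softV Q pol2 s) :
    Hhat P γ ρ μ0 rbar α Q pol2 < Hhat P γ ρ μ0 rbar α Q pol1 := by
  have hW0 : ∀ s a, 0 ≤ softW P γ Q pol1 s a := fun s a =>
    mul_nonneg hγ0 (Finset.sum_nonneg fun s' _ => mul_nonneg (hP0 s a s') (h0 s'))
  have hWle : ∀ s a, softW P γ Q pol1 s a ≤ softW P γ Q pol2 s a := fun s a =>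
    mul_le_mul_of_nonneg_left
      (Finset.sum_le_sum fun s' _ => mul_le_mul_of_nonneg_left (hle s') (hP0 s a s')) hγ0
  obtain ⟨s0, hs0⟩ := hlt
  have h1 : ∑ sa : S × A, ρ sa * (Q sa - softW P γ Q pol2 sa.1 sa.2)
      ≤ ∑ sa : S × A, ρ sa * (Q sa - softW P γ Q pol1 sa.1 sa.2) := by
    apply Finset.sum_le_sum
    intro sa _
    apply mul_le_mul_of_nonneg_left _ (hρ sa)
    linarith [hWle sa.1 sa.2]
  have h2 : (1 - γ) * ∑ s, μ0 s * softV Q pol1 s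
      < (1 - γ) * ∑ s, μ0 s * softV Q pol2 s := by
    apply mul_lt_mul_of_pos_left _ (by linarith)
    exact Finset.sum_lt_sum
      (fun s _ => mul_le_mul_of_nonneg_left (hle s) (hμ0 s).le)
      ⟨s0, Finset.mem_univ _, mul_lt_mul_of_pos_left hs0 (hμ0 s0)⟩
  have h3 : α * ∑ sa : S × A, ρ sa * ((Q sa - rbar sa) ^ 2 + (softW P γ Q pol1 sa.1 sa.2) ^ 2
        + 2 * max 0 (rbar sa - Q sa) * softW P γ Q pol1 sa.1 sa.2)
      ≤ α * ∑ sa : S × A, ρ sa * ((Q sa - rbar sa) ^ 2 + (softW P γ Q pol2 sa.1 sa.2) ^ 2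
        + 2 * max 0 (rbar sa - Q sa) * softW P γ Q pol2 sa.1 sa.2) := by
    apply mul_le_mul_of_nonneg_left _ hα
    apply Finset.sum_le_sum
    intro sa _
    apply mul_le_mul_of_nonneg_left _ (hρ sa)
    have hsq := pow_le_pow_left₀ (hW0 sa.1 sa.2) (hWle sa.1 sa.2) 2
    have hmax : (0:ℝ) ≤ 2 * max 0 (rbar sa - Q sa) := by positivity
    have := mul_le_mul_of_nonneg_left (hWle sa.1 sa.2) hmax
    linarith
  unfold Hhat
  linarith

/-- For every `Q ≥ 0`, the softmax policy
`πQ s a = exp (Q(s,a)) / ∑ a', exp (Q(s,a'))` is a policy and minimizes `π ↦ Ĥ(Q,π)`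
over policies; if moreover `μ0 > 0` pointwise, it is the unique minimizer. -/
theorem Hhat_minimized_at_softmax
    {S A : Type*} [Fintype S] [Fintype A] [Nonempty S] [Nonempty A]
    (P : S → A → S → ℝ) (hP0 : ∀ s a s', 0 ≤ P s a s') (hP1 : ∀ s a, ∑ s', P s a s' = 1)
    (γ : ℝ) (hγ0 : 0 ≤ γ) (hγ1 : γ < 1)
    (ρ : S × A → ℝ) (hρ : ∀ sa, 0 ≤ ρ sa)
    (μ0 : S → ℝ) (hμ0 : ∀ s, 0 ≤ μ0 s)
    (rbar : S × A → ℝ) (α : ℝ) (hα : 0 ≤ α)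
    (Q : S × A → ℝ) (hQ : ∀ sa, 0 ≤ Q sa) :
    (∀ s a, 0 ≤ Real.exp (Q (s, a)) / ∑ a', Real.exp (Q (s, a'))) ∧
    (∀ s, ∑ a, Real.exp (Q (s, a)) / ∑ a', Real.exp (Q (s, a')) = 1) ∧
    (∀ pol : S → A → ℝ, (∀ s a, 0 ≤ pol s a) → (∀ s, ∑ a, pol s a = 1) →
      Hhat P γ ρ μ0 rbar α Q (fun s a => Real.exp (Q (s, a)) / ∑ a', Real.exp (Q (s, a')))
        ≤ Hhat P γ ρ μ0 rbar α Q pol) ∧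
    ((∀ s, 0 < μ0 s) →
      ∀ pol : S → A → ℝ, (∀ s a, 0 ≤ pol s a) → (∀ s, ∑ a, pol s a = 1) →
        pol ≠ (fun s a => Real.exp (Q (s, a)) / ∑ a', Real.exp (Q (s, a'))) →
        Hhat P γ ρ μ0 rbar α Q (fun s a => Real.exp (Q (s, a)) / ∑ a', Real.exp (Q (s, a')))
          < Hhat P γ ρ μ0 rbar α Q pol) := by
  set πQ : S → A → ℝ := fun s a => Real.exp (Q (s, a)) / ∑ a', Real.exp (Q (s, a')) with hπQ
  have hZ : ∀ s : S, 0 < ∑ a', Real.exp (Q (s, a')) := fun s =>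
    Finset.sum_pos (fun a _ => Real.exp_pos _) Finset.univ_nonempty
  have hπ0 : ∀ s a, 0 ≤ πQ s a := fun s a => div_nonneg (Real.exp_pos _).le (hZ s).le
  have hπ1 : ∀ s, ∑ a, πQ s a = 1 := by
    intro s
    rw [hπQ]
    rw [← Finset.sum_div, div_self (hZ s).ne']
  have hVπQ : ∀ s, softV Q πQ s = Real.log (∑ a', Real.exp (Q (s, a'))) := fun s =>
    softmax_val (fun a => Q (s, a))
  refine ⟨hπ0, hπ1, ?_, ?_⟩
  · intro pol hpol0 hpol1
    apply Hhat_anti P hP0 γ hγ0 ρ hρ μ0 hμ0 rbar α hα Q hγ1 pol πQ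
      (softV_nonneg Q hQ pol hpol0 hpol1)
    intro s
    rw [hVπQ s]
    exact gibbs_le (fun a => Q (s, a)) (pol s) (hpol0 s) (hpol1 s)
  · intro hμ0p pol hpol0 hpol1 hne
    apply Hhat_anti_strict P hP0 γ hγ0 ρ hρ μ0 hμ0p rbar α hα Q hγ1 pol πQ
      (softV_nonneg Q hQ pol hpol0 hpol1)
    · intro s
      rw [hVπQ s]
      exact gibbs_le (fun a => Q (s, a)) (pol s) (hpol0 s) (hpol1 s)
    · obtain ⟨s0, hs0⟩ : ∃ s, pol s ≠ fun a => Real.exp (Q (s, a)) / ∑ a', Real.exp (Q (s, a')) := by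
        by_contra hc
        push_neg at hc
        exact hne (funext hc)
      refine ⟨s0, ?_⟩
      rw [hVπQ s0]
      exact gibbs_lt (fun a => Q (s0, a)) (pol s0) (hpol0 s0) (hpol1 s0) hs0
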